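/- Let γ : [0, s̄] → ℝ² be a 1-Lipschitz curve for which there exists a constant C > 0 with |t − s| ≤ C·|γ(t) − γ(s)| for all s, t ∈ [0, s̄], and let φ ∈ L¹(ℝ²). Then for almost every s₀ ∈ [0, s̄] one has limsup_{r → 0+} (1/r)·∫_{B(γ(s₀), r)} |φ(x)| dx < +∞. -/

import Mathlib

open MeasureTheory Filter Metric Set
open scoped ENNReal Topology

noncomputable section

/-- Points of the plane `ℝ²`, with the Euclidean norm. -/
abbrev Euc2 : Type := EuclideanSpace ℝ (Fin 2)

set_option maxHeartbeats 1000000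

/-- Let `γ : [0, sbar] → ℝ²` be a 1-Lipschitz curve such that
`|t − s| ≤ C·|γ(t) − γ(s)|` on `[0, sbar]` for some `C > 0`, and let `φ ∈ L¹(ℝ²)`.
Then for a.e. `s₀ ∈ [0, sbar]`,
`limsup_{r→0+} (1/r)·∫_{B(γ(s₀),r)} |φ| dx < +∞`. -/
theorem ae_limsup_ball_average_lt_top (sbar : ℝ) (γ : ℝ → Euc2)
    (hlip : LipschitzOnWith 1 γ (Icc (0 : ℝ) sbar))
    (C : ℝ) (hC : 0 < C)
    (hbilip : ∀ s ∈ Icc (0 : ℝ) sbar, ∀ t ∈ Icc (0 : ℝ) sbar, |t - s| ≤ C * ‖γ t - γ s‖)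
    (φ : Euc2 → ℝ) (hφ : Integrable φ) :
    ∀ᵐ s₀ ∂(volume.restrict (Icc (0 : ℝ) sbar)),
      Filter.limsup
        (fun r : ℝ => (ENNReal.ofReal r)⁻¹ * ∫⁻ x in ball (γ s₀) r, ENNReal.ofReal |φ x|)
        (𝓝[>] (0 : ℝ)) < ⊤ := by
  set μ₀ : Measure ℝ := volume.restrict (Icc (0 : ℝ) sbar) with hμ₀
  have hγm : AEMeasurable γ μ₀ := hlip.continuousOn.aemeasurable measurableSet_Icc
  set ν : Measure Euc2 := volume.withDensity (fun x => ENNReal.ofReal |φ x|) with hν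
  set μ : Measure Euc2 := Measure.map γ μ₀ with hμdef
  have hνapp : ∀ s : Set Euc2, MeasurableSet s →
      ν s = ∫⁻ x in s, ENNReal.ofReal |φ x| := by
    intro s hs
    rw [hν, withDensity_apply _ hs]
  haveI hνfin : IsFiniteMeasure ν := by
    constructor
    rw [hνapp univ MeasurableSet.univ, Measure.restrict_univ]
    have h := hφ.hasFiniteIntegral
    rw [HasFiniteIntegral] at h
    refine lt_of_le_of_lt (le_of_eq ?_) h
    refine lintegral_congr fun x => ?_
    rw [← Real.norm_eq_abs, ofReal_norm_eq_enorm]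
  haveI hμfin : IsFiniteMeasure μ := by
    constructor
    rw [hμdef, Measure.map_apply_of_aemeasurable hγm MeasurableSet.univ]
    refine lt_of_le_of_lt (measure_mono (subset_univ _)) ?_
    rw [hμ₀, Measure.restrict_apply_univ, Real.volume_Icc]
    exact ENNReal.ofReal_lt_top
  have hbes : ∀ᵐ y ∂μ, Tendsto
      (fun r => ν (closedBall y r) / μ (closedBall y r)) (𝓝[>] (0:ℝ))
      (𝓝 (ν.rnDeriv μ y)) := Besicovitch.ae_tendsto_rnDeriv ν μ
  have hfin : ∀ᵐ y ∂μ, ν.rnDeriv μ y < ⊤ := Measure.rnDeriv_lt_top ν μ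
  have hae : ∀ᵐ s₀ ∂μ₀,
      (Tendsto (fun r => ν (closedBall (γ s₀) r) / μ (closedBall (γ s₀) r))
        (𝓝[>] (0:ℝ)) (𝓝 (ν.rnDeriv μ (γ s₀)))) ∧ ν.rnDeriv μ (γ s₀) < ⊤ :=
    ae_of_ae_map hγm (hbes.and hfin)
  filter_upwards [hae, ae_restrict_mem measurableSet_Icc] with s₀ hs hmem
  obtain ⟨htend, hlt⟩ := hs
  -- key pointwise bound for r > 0
  have key : ∀ r : ℝ, 0 < r →
      (ENNReal.ofReal r)⁻¹ * ∫⁻ x in ball (γ s₀) r, ENNReal.ofReal |φ x| ≤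
      ENNReal.ofReal (2 * C) *
        (ν (closedBall (γ s₀) r) / μ (closedBall (γ s₀) r)) := by
    intro r hr
    have hμub : μ (closedBall (γ s₀) r) ≤ ENNReal.ofReal (2 * C) * ENNReal.ofReal r := by
      rw [hμdef, Measure.map_apply_of_aemeasurable hγm measurableSet_closedBall, hμ₀,
        Measure.restrict_apply' measurableSet_Icc]
      have hsub : γ ⁻¹' closedBall (γ s₀) r ∩ Icc (0:ℝ) sbar ⊆ closedBall s₀ (C * r) := by
        intro s ⟨h1, h2⟩
        rw [mem_closedBall, Real.dist_eq]
        calc |s - s₀| ≤ C * ‖γ s - γ s₀‖ := hbilip s₀ hmem s h2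
          _ ≤ C * r := by
              refine mul_le_mul_of_nonneg_left ?_ hC.le
              rw [← dist_eq_norm]
              exact h1
      refine le_trans (measure_mono hsub) ?_
      rw [Real.volume_closedBall, ← ENNReal.ofReal_mul (by positivity)]
      exact ENNReal.ofReal_le_ofReal (by ring_nf; nlinarith)
    have hinv : (ENNReal.ofReal r)⁻¹ ≤
        ENNReal.ofReal (2 * C) * (μ (closedBall (γ s₀) r))⁻¹ := by
      rw [← div_eq_mul_inv, ← ENNReal.inv_div (Or.inl ENNReal.ofReal_ne_top)
        (Or.inl (by simp [ENNReal.ofReal_eq_zero]; nlinarith))]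
      exact ENNReal.inv_le_inv' (ENNReal.div_le_of_le_mul' hμub)
    calc (ENNReal.ofReal r)⁻¹ * ∫⁻ x in ball (γ s₀) r, ENNReal.ofReal |φ x|
        ≤ (ENNReal.ofReal (2 * C) * (μ (closedBall (γ s₀) r))⁻¹) * ν (closedBall (γ s₀) r) := by
          refine mul_le_mul' hinv ?_
          rw [hνapp _ measurableSet_closedBall]
          exact lintegral_mono_set ball_subset_closedBall
      _ = ENNReal.ofReal (2 * C) * (ν (closedBall (γ s₀) r) / μ (closedBall (γ s₀) r)) := by
          rw [div_eq_mul_inv]; ring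
  have hev : ∀ᶠ r in 𝓝[>] (0:ℝ),
      (ENNReal.ofReal r)⁻¹ * ∫⁻ x in ball (γ s₀) r, ENNReal.ofReal |φ x| ≤
      ENNReal.ofReal (2 * C) *
        (ν (closedBall (γ s₀) r) / μ (closedBall (γ s₀) r)) :=
    eventually_of_mem self_mem_nhdsWithin (fun r hr => key r hr)
  have hg : Tendsto (fun r => ENNReal.ofReal (2 * C) *
      (ν (closedBall (γ s₀) r) / μ (closedBall (γ s₀) r))) (𝓝[>] (0:ℝ))
      (𝓝 (ENNReal.ofReal (2 * C) * ν.rnDeriv μ (γ s₀))) :=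
    ENNReal.Tendsto.const_mul htend (Or.inr ENNReal.ofReal_ne_top)
  calc Filter.limsup
        (fun r : ℝ => (ENNReal.ofReal r)⁻¹ * ∫⁻ x in ball (γ s₀) r, ENNReal.ofReal |φ x|)
        (𝓝[>] (0 : ℝ))
      ≤ Filter.limsup (fun r => ENNReal.ofReal (2 * C) *
          (ν (closedBall (γ s₀) r) / μ (closedBall (γ s₀) r))) (𝓝[>] (0:ℝ)) :=
        limsup_le_limsup hev
    _ = ENNReal.ofReal (2 * C) * ν.rnDeriv μ (γ s₀) := hg.limsup_eq
    _ < ⊤ := ENNReal.mul_lt_top ENNReal.ofReal_lt_top hlt
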